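/- Let m be a natural number, s_0,…,s_m ∈ ℂ support points, w = (w_0,…,w_m) ∈ ℂ^{m+1}, and ν a natural number with 1 ≤ ν ≤ m. Let φ_0,…,φ_{ν−1} ∈ ℂ[X] be a basis of the ℂ-vector space of polynomials of degree < ν. If w is nonzero and ∑_{k=0}^m w_k · φ_i(s_k) = 0 for every i = 0,…,ν−1, then the denominator polynomial q = ∑_{k=0}^m w_k · ∏_{j≠k} (X − s_j) has degree at most m − ν. -/

import Mathlib

open Polynomial

private lemma reflect_prod_linear (s : ℕ → ℂ) (t : Finset ℕ) :
    Polynomial.reflect t.card (∏ j ∈ t, (Polynomial.X - Polynomial.C (s j)))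
      = ∏ j ∈ t, (1 - Polynomial.C (s j) * Polynomial.X) := by
  classical
  induction t using Finset.induction with
  | empty => simp
  | @insert a t ha ih =>
    rw [Finset.prod_insert ha, Finset.prod_insert ha, Finset.card_insert_of_notMem ha]
    have h1 : (X - C (s a) : ℂ[X]).natDegree ≤ 1 := natDegree_X_sub_C_le _
    have h2 : (∏ j ∈ t, (X - C (s j)) : ℂ[X]).natDegree ≤ t.card := by
      refine (natDegree_prod_le _ _).trans ?_
      calc ∑ j ∈ t, (X - C (s j) : ℂ[X]).natDegree ≤ ∑ _j ∈ t, 1 :=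
            Finset.sum_le_sum fun j _ => natDegree_X_sub_C_le _
        _ = t.card := by simp
    have : (1 : ℕ) + t.card = t.card + 1 := by omega
    rw [← this, reflect_mul _ _ h1 h2, ih]
    congr 1
    have : (X - C (s a) : ℂ[X]) = X ^ 1 - C (s a) := by ring
    rw [this, sub_eq_add_neg, reflect_add, ← C_neg, reflect_C, reflect_monomial]
    simp [revAt_le]
    ring

private lemma reflect_sum_aux (m : ℕ) (t : Finset ℕ) (f : ℕ → ℂ[X]) :
    Polynomial.reflect m (∑ k ∈ t, f k) = ∑ k ∈ t, Polynomial.reflect m (f k) := by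
  classical
  induction t using Finset.induction with
  | empty => simp
  | @insert a t ha ih => rw [Finset.sum_insert ha, Finset.sum_insert ha, reflect_add, ih]

/-- Denominator part of the paper's Corollary 3.3: if the weight vector lies in the
null space of the transpose of the generalized Vandermonde matrix built from a basis
of the polynomials of degree `< ν`, then the barycentric denominator polynomial has
degree at most `m - ν`. -/
theorem denominator_degree_le_of_vandermonde (m : ℕ) (s w : ℕ → ℂ) (ν : ℕ)
    (hν1 : 1 ≤ ν) (hνm : ν ≤ m)
    (φ : Fin ν → Polynomial ℂ)
    (b : Module.Basis (Fin ν) ℂ (Polynomial.degreeLT ℂ ν))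
    (hφ : ∀ i : Fin ν, (b i : Polynomial ℂ) = φ i)
    (hw : ∃ k ∈ Finset.range (m + 1), w k ≠ 0)
    (hnull : ∀ i : Fin ν, ∑ k ∈ Finset.range (m + 1), w k * (φ i).eval (s k) = 0)
    (q : Polynomial ℂ)
    (hq : q = ∑ k ∈ Finset.range (m + 1),
      C (w k) * ∏ j ∈ (Finset.range (m + 1)).erase k, (X - C (s j))) :
    q.degree ≤ (m - ν : ℕ) := by
  classical
  -- Step 1: the weight functional vanishes on all polynomials of degree < ν
  have key : ∀ p : Polynomial ℂ, p ∈ degreeLT ℂ ν →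
      ∑ k ∈ Finset.range (m + 1), w k * p.eval (s k) = 0 := by
    intro p hp
    set Λ : Polynomial ℂ →ₗ[ℂ] ℂ :=
      ∑ k ∈ Finset.range (m + 1), w k • Polynomial.leval (s k) with hΛ
    have hΛap : ∀ r : Polynomial ℂ,
        Λ r = ∑ k ∈ Finset.range (m + 1), w k * r.eval (s k) := by
      intro r
      simp [hΛ, LinearMap.sum_apply, Polynomial.leval_apply, smul_eq_mul]
    have h0 : Λ.comp (degreeLT ℂ ν).subtype = 0 := by
      apply b.ext
      intro i
      simp only [LinearMap.comp_apply, Submodule.subtype_apply, LinearMap.zero_apply]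
      rw [hφ i, hΛap]
      exact hnull i
    have := DFunLike.congr_fun h0 ⟨p, hp⟩
    simpa [hΛap] using this
  have key2 : ∀ t, t < ν → ∑ k ∈ Finset.range (m + 1), w k * s k ^ t = 0 := by
    intro t ht
    have hmem : (X ^ t : Polynomial ℂ) ∈ degreeLT ℂ ν := by
      rw [Polynomial.mem_degreeLT, degree_X_pow]
      exact_mod_cast ht
    simpa using key _ hmem
  -- Step 2: reflected denominator is divisible by X^ν
  set P : Polynomial ℂ := ∏ j ∈ Finset.range (m + 1), (1 - C (s j) * X) with hP
  set G : ℕ → Polynomial ℂ := fun k => ∑ t ∈ Finset.range ν, C (s k ^ t) * X ^ t with hGdef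
  have hGk : ∀ k, (1 - C (s k) * X) * G k = 1 - C (s k ^ ν) * X ^ ν := by
    intro k
    have hgs := geom_sum_mul (C (s k) * X) ν
    have hG' : G k = ∑ i ∈ Finset.range ν, (C (s k) * X) ^ i := by
      refine Finset.sum_congr rfl fun i _ => ?_
      rw [mul_pow, ← C_pow]
    rw [hG', show (C (s k ^ ν) : ℂ[X]) = C (s k) ^ ν from map_pow _ _ _]
    linear_combination -hgs
  have hLk : ∀ k ∈ Finset.range (m + 1),
      (∏ j ∈ (Finset.range (m + 1)).erase k, (1 - C (s j) * X))
        = G k * P + X ^ ν *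
          (C (s k ^ ν) * ∏ j ∈ (Finset.range (m + 1)).erase k, (1 - C (s j) * X)) := by
    intro k hk
    have hsplit : (1 - C (s k) * X) *
        ∏ j ∈ (Finset.range (m + 1)).erase k, (1 - C (s j) * X) = P :=
      Finset.mul_prod_erase (Finset.range (m + 1)) (fun j => 1 - C (s j) * X) hk
    linear_combination (G k) * hsplit -
      (∏ j ∈ (Finset.range (m + 1)).erase k, (1 - C (s j) * X)) * hGk k
  have hzero : ∑ k ∈ Finset.range (m + 1), C (w k) * G k = 0 := by
    simp only [hGdef, Finset.mul_sum]
    rw [Finset.sum_comm]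
    refine Finset.sum_eq_zero fun t ht => ?_
    have hk2 := key2 t (Finset.mem_range.mp ht)
    calc ∑ k ∈ Finset.range (m + 1), C (w k) * (C (s k ^ t) * X ^ t)
        = C (∑ k ∈ Finset.range (m + 1), w k * s k ^ t) * X ^ t := by
          rw [map_sum, Finset.sum_mul]
          refine Finset.sum_congr rfl fun k _ => ?_
          rw [map_mul]; ring
      _ = 0 := by rw [hk2, map_zero, zero_mul]
  have hR : (∑ k ∈ Finset.range (m + 1),
        C (w k) * ∏ j ∈ (Finset.range (m + 1)).erase k, (1 - C (s j) * X))
      = X ^ ν * ∑ k ∈ Finset.range (m + 1), C (w k) *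
          (C (s k ^ ν) * ∏ j ∈ (Finset.range (m + 1)).erase k, (1 - C (s j) * X)) := by
    calc ∑ k ∈ Finset.range (m + 1),
          C (w k) * ∏ j ∈ (Finset.range (m + 1)).erase k, (1 - C (s j) * X)
        = ∑ k ∈ Finset.range (m + 1), (C (w k) * G k * P + X ^ ν * (C (w k) *
            (C (s k ^ ν) * ∏ j ∈ (Finset.range (m + 1)).erase k, (1 - C (s j) * X)))) := by
          refine Finset.sum_congr rfl fun k hk => ?_
          linear_combination C (w k) * hLk k hk
      _ = (∑ k ∈ Finset.range (m + 1), C (w k) * G k) * P + X ^ ν *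
            ∑ k ∈ Finset.range (m + 1), C (w k) *
              (C (s k ^ ν) * ∏ j ∈ (Finset.range (m + 1)).erase k, (1 - C (s j) * X)) := by
          rw [Finset.sum_add_distrib, Finset.sum_mul, Finset.mul_sum]
      _ = _ := by rw [hzero, zero_mul, zero_add]
  -- Step 3: reflect q equals the sum above
  have hcard : ∀ k ∈ Finset.range (m + 1), ((Finset.range (m + 1)).erase k).card = m := by
    intro k hk
    rw [Finset.card_erase_of_mem hk, Finset.card_range]
    omega
  have hrefl : Polynomial.reflect m q
      = ∑ k ∈ Finset.range (m + 1),
          C (w k) * ∏ j ∈ (Finset.range (m + 1)).erase k, (1 - C (s j) * X) := by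
    rw [hq, reflect_sum_aux]
    refine Finset.sum_congr rfl fun k hk => ?_
    rw [reflect_C_mul]
    congr 1
    have := reflect_prod_linear s ((Finset.range (m + 1)).erase k)
    rwa [hcard k hk] at this
  have hdvd : Polynomial.reflect m q = X ^ ν * ∑ k ∈ Finset.range (m + 1), C (w k) *
      (C (s k ^ ν) * ∏ j ∈ (Finset.range (m + 1)).erase k, (1 - C (s j) * X)) := by
    rw [hrefl, hR]
  -- degree bound on q
  have hdeg : q.degree ≤ (m : WithBot ℕ) := by
    rw [hq]
    refine (degree_sum_le _ _).trans (Finset.sup_le fun k hk => ?_)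
    refine (degree_mul_le _ _).trans ?_
    have h1 : (C (w k) : ℂ[X]).degree ≤ 0 := degree_C_le
    have h2 : (∏ j ∈ (Finset.range (m + 1)).erase k, (X - C (s j)) : ℂ[X]).degree
        ≤ (m : WithBot ℕ) := by
      refine (degree_prod_le _ _).trans ?_
      calc ∑ j ∈ (Finset.range (m + 1)).erase k, (X - C (s j) : ℂ[X]).degree
          ≤ ∑ _j ∈ (Finset.range (m + 1)).erase k, (1 : WithBot ℕ) :=
            Finset.sum_le_sum fun j _ => degree_X_sub_C_le _
        _ = (m : WithBot ℕ) := by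
            rw [Finset.sum_const, hcard k hk]
            simp
    calc (C (w k) : ℂ[X]).degree +
          (∏ j ∈ (Finset.range (m + 1)).erase k, (X - C (s j)) : ℂ[X]).degree
        ≤ 0 + (m : WithBot ℕ) := add_le_add h1 h2
      _ = (m : WithBot ℕ) := by rw [zero_add]
  -- conclude
  rw [Polynomial.degree_le_iff_coeff_zero]
  intro d hd
  have hd' : m - ν < d := by exact_mod_cast hd
  by_cases hdm : d ≤ m
  · have hmd : m - d < ν := by omega
    have h1 : q.coeff d = (Polynomial.reflect m q).coeff (m - d) := by
      rw [coeff_reflect, revAt_le (Nat.sub_le m d), Nat.sub_sub_self hdm]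
    rw [h1, hdvd, mul_comm, coeff_mul_X_pow']
    simp [Nat.not_le.mpr hmd]
  · exact coeff_eq_zero_of_degree_lt (lt_of_le_of_lt hdeg (by exact_mod_cast Nat.lt_of_not_le hdm))
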